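/- Let q be the canonical coefficient family with parameter λ ≠ 0, and let a = (a_0,…,a_r) ∈ ℂ^{r+1} with a_r ≠ 0. Let J be the (n+1)×(r+1) complex matrix with entries J_{k,i} = 2·q_k(i, 2m+k−i)·a_{2m+k−i} for 0 ≤ k ≤ n, 0 ≤ i ≤ r (where the entry is 0 if 2m+k−i lies outside {0,…,r}). Then rank(J) ≥ r − 2m + 1. (This is the Jacobian of (Q_0,…,Q_n) at a, and it shows every irreducible component of M_m has dimension strictly less than 2m.) -/

import Mathlib

open Finset

noncomputable section

/-- `famN r m = 2r - 4m`, the highest weight `n` of the target representation. -/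
def famN (r m : ℕ) : ℤ := 2 * (r : ℤ) - 4 * (m : ℤ)

/-- A *coefficient family* for parameters `r, m`: a function `q k i j` (complex valued,
indices integers) that vanishes whenever `(k,i,j)` is out of range
(`0 ≤ k ≤ n`, `0 ≤ i,j ≤ r`, where `n = 2r - 4m`) and satisfies the sl₂-compatibility
relations (R1), (R2), (R3) for all admissible indices. -/
def IsCoeffFamily (r m : ℕ) (q : ℤ → ℤ → ℤ → ℂ) : Prop :=
  (∀ k i j : ℤ,
      ¬(0 ≤ k ∧ k ≤ famN r m ∧ 0 ≤ i ∧ i ≤ (r : ℤ) ∧ 0 ≤ j ∧ j ≤ (r : ℤ)) →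
      q k i j = 0) ∧
  (∀ k i j : ℤ, 0 ≤ k → k ≤ famN r m → 0 ≤ i → i ≤ (r : ℤ) → 0 ≤ j → j ≤ (r : ℤ) →
      (k : ℂ) * q (k - 1) i j
        = ((i : ℂ) + 1) * q k (i + 1) j + ((j : ℂ) + 1) * q k i (j + 1)) ∧
  (∀ k i j : ℤ, 0 ≤ k → k ≤ famN r m → 0 ≤ i → i ≤ (r : ℤ) → 0 ≤ j → j ≤ (r : ℤ) →
      ((famN r m - k : ℤ) : ℂ) * q (k + 1) i j
        = (((r : ℤ) - i + 1 : ℤ) : ℂ) * q k (i - 1) j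
          + (((r : ℤ) - j + 1 : ℤ) : ℂ) * q k i (j - 1)) ∧
  (∀ k i j : ℤ, 0 ≤ k → k ≤ famN r m → 0 ≤ i → i ≤ (r : ℤ) → 0 ≤ j → j ≤ (r : ℤ) →
      ((famN r m - 2 * k - 2 * (r : ℤ) + 2 * i + 2 * j : ℤ) : ℂ) * q k i j = 0)

/-- Binomial coefficient `binom a b` for integers, interpreted as `0` when `b` is out of
the range `0 ≤ b ≤ a`, as a complex number. -/
def binomZ (a b : ℤ) : ℂ :=
  if 0 ≤ b ∧ b ≤ a then (Nat.choose a.toNat b.toNat : ℂ) else 0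

/-- The *canonical coefficient family* with parameter `λ`: the coefficient family whose
level-0 component is `q₀ i j = (-1)^i * binom (2m) i * λ` if `i + j = 2m` and `0`
otherwise. -/
def IsCanonical (r m : ℕ) (lam : ℂ) (q : ℤ → ℤ → ℤ → ℂ) : Prop :=
  IsCoeffFamily r m q ∧
  ∀ i j : ℤ, 0 ≤ i → i ≤ (r : ℤ) → 0 ≤ j → j ≤ (r : ℤ) →
    q 0 i j =
      if i + j = 2 * (m : ℤ) then (-1) ^ i.toNat * binomZ (2 * (m : ℤ)) i * lam else 0
lemma qA (r m : ℕ) (hm : 2*m ≤ r) (lam : ℂ) (hlam : lam ≠ 0)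
    (q : ℤ → ℤ → ℤ → ℂ) (hq : IsCanonical r m lam q) :
    ∀ k : ℕ, k ≤ r - 2*m → q (k:ℤ) 0 (2*(m:ℤ) + k) ≠ 0 := by
  obtain ⟨⟨hz, hR1, hR2, hR3⟩, h0⟩ := hq
  intro k
  induction k with
  | zero =>
    intro _
    have h := h0 0 (2*(m:ℤ)) le_rfl (by exact_mod_cast Nat.zero_le r) (by positivity)
      (by exact_mod_cast hm)
    push_cast
    rw [add_zero, h]
    simp [binomZ, hlam]
  | succ k ih =>
    intro hk
    have hk' : k + 1 + 2*m ≤ r := by omega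
    have hR2' := hR2 (k:ℤ) 0 (2*(m:ℤ) + k + 1) (by positivity)
      (by simp only [famN]; push_cast; omega) le_rfl
      (by push_cast; omega) (by positivity) (by push_cast; omega)
    have hz' : q (k:ℤ) (0 - 1) (2*(m:ℤ) + k + 1) = 0 := hz _ _ _ (by simp only [famN]; omega)
    rw [hz'] at hR2'
    have h1 : ((famN r m - k : ℤ) : ℂ) ≠ 0 := by
      rw [Int.cast_ne_zero]; simp only [famN]; omega
    have h2 : (((r:ℤ) - (2*(m:ℤ) + k + 1) + 1 : ℤ) : ℂ) ≠ 0 := by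
      rw [Int.cast_ne_zero]; omega
    have h3 : q (k:ℤ) 0 (2*(m:ℤ) + k + 1 - 1) ≠ 0 := by
      have := ih (by omega)
      convert this using 2
      ring
    intro hcon
    have : q ((k:ℤ) + 1) 0 (2*(m:ℤ) + k + 1) = 0 := by
      convert hcon using 2 <;> push_cast <;> ring
    rw [this, mul_zero, mul_zero, zero_add] at hR2'
    rcases mul_eq_zero.1 hR2'.symm with h | h
    · exact h2 h
    · exact h3 h

lemma qB (r m : ℕ) (hm : 2*m ≤ r) (lam : ℂ) (hlam : lam ≠ 0)
    (q : ℤ → ℤ → ℤ → ℂ) (hq : IsCanonical r m lam q) :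
    ∀ t : ℕ, t ≤ r - 2*m → q ((r - 2*m + t : ℕ):ℤ) (t:ℤ) (r:ℤ) ≠ 0 := by
  have hqA := qA r m hm lam hlam q hq
  obtain ⟨⟨hz, hR1, hR2, hR3⟩, h0⟩ := hq
  intro t
  induction t with
  | zero =>
    intro _
    have := hqA (r - 2*m) le_rfl
    convert this using 2
    all_goals push_cast [Nat.cast_sub hm]
    all_goals ring
  | succ t ih =>
    intro ht
    have ht' : t + 1 + 2*m ≤ r := by omega
    have hR1' := hR1 ((r - 2*m + (t+1) : ℕ):ℤ) (t:ℤ) (r:ℤ)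
      (by positivity) (by simp only [famN]; push_cast [Nat.cast_sub hm]; omega)
      (by positivity) (by push_cast; omega) (by positivity) le_rfl
    have hz' : q ((r - 2*m + (t+1) : ℕ):ℤ) (t:ℤ) ((r:ℤ) + 1) = 0 :=
      hz _ _ _ (by omega)
    rw [hz', mul_zero, add_zero] at hR1'
    have hprev : q ((r - 2*m + (t+1) : ℕ):ℤ) - 1 = 0 → True := fun _ => trivial
    have harg : ((r - 2*m + (t+1) : ℕ):ℤ) - 1 = ((r - 2*m + t : ℕ):ℤ) := by
      push_cast [Nat.cast_sub hm]; ring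
    rw [harg] at hR1'
    have hL : (((r - 2*m + (t+1) : ℕ):ℤ):ℂ) * q ((r - 2*m + t : ℕ):ℤ) (t:ℤ) (r:ℤ) ≠ 0 := by
      apply mul_ne_zero
      · rw [Int.cast_ne_zero]; omega
      · exact ih (by omega)
    rw [hR1'] at hL
    intro hcon
    have : q ((r - 2*m + (t+1) : ℕ):ℤ) ((t:ℤ) + 1) (r:ℤ) = 0 := by
      convert hcon using 2 <;> (push_cast; ring)
    rw [this, mul_zero] at hL
    exact hL rfl

/-- the Jacobian matrix of `(Q_0, …, Q_n)` at a point `a` with `a_r ≠ 0`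
has rank at least `r - 2m + 1`. -/
theorem stmt8 (r m : ℕ) (hr : 2 ≤ r) (hm : 2 * m ≤ r)
    (lam : ℂ) (hlam : lam ≠ 0)
    (q : ℤ → ℤ → ℤ → ℂ) (hq : IsCanonical r m lam q)
    (a : ℤ → ℂ)
    (harange : ∀ i : ℤ, ¬(0 ≤ i ∧ i ≤ (r : ℤ)) → a i = 0)
    (har : a (r : ℤ) ≠ 0) :
    r - 2 * m + 1 ≤
      (Matrix.of fun (k : Fin (2 * r - 4 * m + 1)) (i : Fin (r + 1)) =>
        2 * q ((k : ℕ) : ℤ) ((i : ℕ) : ℤ) (2 * (m : ℤ) + ((k : ℕ) : ℤ) - ((i : ℕ) : ℤ))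
          * a (2 * (m : ℤ) + ((k : ℕ) : ℤ) - ((i : ℕ) : ℤ))).rank := by
  have hqB := qB r m hm lam hlam q hq
  set s := r - 2 * m with hs
  set J : Matrix (Fin (2 * r - 4 * m + 1)) (Fin (r + 1)) ℂ :=
    Matrix.of fun (k : Fin (2 * r - 4 * m + 1)) (i : Fin (r + 1)) =>
        2 * q ((k : ℕ) : ℤ) ((i : ℕ) : ℤ) (2 * (m : ℤ) + ((k : ℕ) : ℤ) - ((i : ℕ) : ℤ))
          * a (2 * (m : ℤ) + ((k : ℕ) : ℤ) - ((i : ℕ) : ℤ)) with hJ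
  let f : Fin (s + 1) → Fin (2 * r - 4 * m + 1) := fun t => ⟨s + t, by have := t.isLt; omega⟩
  let g : Fin (s + 1) → Fin (r + 1) := fun i => ⟨i, by have := i.isLt; omega⟩
  set S : Matrix (Fin (s + 1)) (Fin (s + 1)) ℂ := J.submatrix f g with hS
  have htri : S.BlockTriangular id := by
    intro t i hlt
    have hlt' : (i : ℕ) < (t : ℕ) := hlt
    have hZ : a (2 * (m:ℤ) + ((s + (t:ℕ) : ℕ):ℤ) - ((i:ℕ):ℤ)) = 0 := by
      apply harange
      push_cast [Nat.cast_sub hm]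
      omega
    simp only [hS, Matrix.submatrix_apply, hJ, Matrix.of_apply]
    show 2 * q _ _ _ * a _ = 0
    rw [hZ, mul_zero]
  have hdiag : ∀ t : Fin (s + 1), S t t ≠ 0 := by
    intro t
    have harg1 : ((s + (t:ℕ) : ℕ):ℤ) = ((r - 2*m + (t:ℕ) : ℕ):ℤ) := by
      push_cast [Nat.cast_sub hm, hs]; ring
    have harg2 : 2 * (m:ℤ) + ((s + (t:ℕ) : ℕ):ℤ) - ((t:ℕ):ℤ) = (r:ℤ) := by
      push_cast [Nat.cast_sub hm, hs]; ring
    show 2 * q ((s + (t:ℕ) : ℕ):ℤ) ((t:ℕ):ℤ) _ * a _ ≠ 0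
    rw [harg2, harg1]
    exact mul_ne_zero (mul_ne_zero two_ne_zero (hqB (t:ℕ) (by have := t.isLt; omega))) har
  have hdet : S.det ≠ 0 := by
    rw [Matrix.det_of_upperTriangular htri]
    exact Finset.prod_ne_zero_iff.2 fun t _ => hdiag t
  have hrankS : S.rank = s + 1 := by
    rw [Matrix.rank_of_isUnit S (by rwa [Matrix.isUnit_iff_isUnit_det, isUnit_iff_ne_zero])]
    simp
  have hfact : S = ((1 : Matrix (Fin (2*r-4*m+1)) (Fin (2*r-4*m+1)) ℂ).submatrix f
        (Equiv.refl _) * J) * ((1 : Matrix (Fin (r+1)) (Fin (r+1)) ℂ).submatrix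
        (Equiv.refl _) g) := by
    rw [Matrix.one_submatrix_mul, Matrix.mul_submatrix_one]
    simp [hS]
  have hle : S.rank ≤ J.rank := by
    rw [hfact]
    exact le_trans (Matrix.rank_mul_le_left _ _) (Matrix.rank_mul_le_right _ _)
  omega
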